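/- In the PDSTSP truck-route setting, let H ⊆ V_c, let H' ⊆ H satisfy |H'| ≥ 3 with |H'| odd, and let E' be a set of two-element edges of the complete graph on V such that: (i) every edge in E' has exactly one endpoint in H', (ii) every vertex of H' is an endpoint of exactly one edge of E', (iii) no edge in E' has both endpoints in H, and (iv) no two distinct edges in E' share an endpoint. Then in(H) + |{e ∈ E' : e is an edge of P}| ≤ ∑_{j ∈ H} y_j + (|H'| − 1)/2. -/

import Mathlib

/-- Number of edges of the path (given as the list of its vertices) with both
endpoints in `S`. -/
def inCount {α : Type*} [DecidableEq α] (S : Finset α) (p : List α) : ℕ :=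
  (p.zip p.tail).countP (fun e => decide (e.1 ∈ S ∧ e.2 ∈ S))

/-- Number of edges of the path (given as the list of its vertices) with exactly
one endpoint in `S`. -/
def cutCount {α : Type*} [DecidableEq α] (S : Finset α) (p : List α) : ℕ :=
  (p.zip p.tail).countP (fun e => decide (Xor (e.1 ∈ S) (e.2 ∈ S)))

/-- The edges of the path (given as the list of its vertices), as unordered pairs. -/
def pathSym2Edges {α : Type*} (p : List α) : List (Sym2 α) :=
  (p.zip p.tail).map (fun q => s(q.1, q.2))

lemma boundary_key {α : Type*} [DecidableEq α] (S : Finset α) :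
    ∀ (p : List α) (x : α),
      2 * inCount S (x :: p) + cutCount S (x :: p)
        + (if x ∈ S then 1 else 0)
        + (if (x :: p).getLast (by simp) ∈ S then 1 else 0)
      = 2 * (x :: p).countP (fun a => decide (a ∈ S)) := by
  intro p
  induction p with
  | nil =>
      intro x
      simp [inCount, cutCount, List.countP_cons]
      by_cases hx : x ∈ S <;> simp [hx]
  | cons y t ih =>
      intro x
      have hin : inCount S (x :: y :: t)
          = (if x ∈ S ∧ y ∈ S then 1 else 0) + inCount S (y :: t) := by
        simp [inCount, List.countP_cons]
        by_cases h : x ∈ S ∧ y ∈ S <;> simp [h] <;> omega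
      have hcut : cutCount S (x :: y :: t)
          = (if Xor (x ∈ S) (y ∈ S) then 1 else 0) + cutCount S (y :: t) := by
        simp [cutCount, List.countP_cons]
        by_cases h : Xor (x ∈ S) (y ∈ S) <;> simp [h] <;> omega
      have hlast : (x :: y :: t).getLast (by simp) = (y :: t).getLast (by simp) :=
        List.getLast_cons (by simp)
      have hcp : (x :: y :: t).countP (fun a => decide (a ∈ S))
          = (y :: t).countP (fun a => decide (a ∈ S)) + (if x ∈ S then 1 else 0) := by
        rw [List.countP_cons]
        by_cases hx : x ∈ S <;> simp [hx]
      rw [hin, hcut, hlast, hcp]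
      have := ih y
      by_cases hx : x ∈ S <;> by_cases hy : y ∈ S <;>
        simp [hx, hy, Xor] at * <;> omega

/-- the 2-matching inequality
`in(H) + |{e ∈ E' : e is an edge of P}| ≤ ∑_{j ∈ H} y_j + (|H'| − 1)/2`. -/
theorem pdstsp_two_matching
    {α : Type*} [DecidableEq α]
    (Vc : Finset α) (d d' : α)
    (hdd' : d ≠ d') (hdVc : d ∉ Vc) (hd'Vc : d' ∉ Vc)
    (Vt Sstar : Finset α)
    (hVtVc : Vt ⊆ Vc) (hSstarVc : Sstar ⊆ Vc) (hVtSstar : Vt ⊆ Sstar)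
    -- the truck path `P` is `d :: l ++ [d']`, a simple path from `d` to `d'`
    (l : List α)
    (hnodup : (d :: (l ++ [d'])).Nodup)
    (hinternal : l.toFinset = Sstar)
    (y : α → ℕ) (hy : ∀ i, y i = if i ∈ Sstar then 1 else 0)
    (H H' : Finset α) (hH : H ⊆ Vc) (hH' : H' ⊆ H)
    (hH'card : 3 ≤ H'.card) (hH'odd : Odd H'.card)
    -- `E'` is a set of (two-element) edges of the complete graph on `V`
    (E' : Finset (Sym2 α))
    (hE'edges : ∀ e ∈ E', ¬ e.IsDiag ∧ ∀ v ∈ e, v ∈ insert d (insert d' Vc))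
    -- (i) every edge in `E'` has exactly one endpoint in `H'`
    (hi : ∀ e ∈ E', ∃ a b, e = s(a, b) ∧ a ∈ H' ∧ b ∉ H')
    -- (ii) every vertex of `H'` is an endpoint of exactly one edge of `E'`
    (hii : ∀ v ∈ H', ∃! e, e ∈ E' ∧ v ∈ e)
    -- (iii) no edge in `E'` has both endpoints in `H`
    (hiii : ∀ e ∈ E', ¬ (∀ v ∈ e, v ∈ H))
    -- (iv) no two distinct edges in `E'` share an endpoint
    (hiv : ∀ e₁ ∈ E', ∀ e₂ ∈ E', e₁ ≠ e₂ → ∀ v ∈ e₁, v ∉ e₂) :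
    inCount H (d :: (l ++ [d']))
        + (E'.filter (fun e => e ∈ pathSym2Edges (d :: (l ++ [d'])))).card
      ≤ (∑ j ∈ H, y j) + (H'.card - 1) / 2 := by
  classical
  have hdH : d ∉ H := fun h => hdVc (hH h)
  have hd'H : d' ∉ H := fun h => hd'Vc (hH h)
  have hends : ∀ e ∈ E', ∀ a b, e = s(a, b) → a ∈ H' → b ∉ H := by
    intro e he a b hab haH' hbH
    exact hiii e he (by
      intro v hv
      rw [hab] at hv
      rcases Sym2.mem_iff.mp hv with rfl | rfl
      · exact hH' haH'
      · exact hbH)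
  have hlast : ((d :: (l ++ [d'])).getLast (by simp)) = d' := by simp
  have hkey := boundary_key H (l ++ [d']) d
  rw [hlast] at hkey
  simp only [hdH, hd'H, if_false] at hkey
  have hnl : l.Nodup := (List.nodup_append.mp (List.nodup_cons.mp hnodup).2).1
  have hcp : (d :: (l ++ [d'])).countP (fun a => decide (a ∈ H)) = (Sstar ∩ H).card := by
    have h1 : (d :: (l ++ [d'])).countP (fun a => decide (a ∈ H))
        = l.countP (fun a => decide (a ∈ H)) := by
      simp [List.countP_cons, List.countP_append, hdH, hd'H]
    rw [h1, List.countP_eq_length_filter]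
    have h2 : (l.filter (fun a => decide (a ∈ H))).toFinset.card
        = (l.filter (fun a => decide (a ∈ H))).length :=
      List.toFinset_card_of_nodup (hnl.filter _)
    rw [← h2, List.toFinset_filter, hinternal]
    congr 1
    ext a
    simp only [Finset.mem_filter, Finset.mem_inter, decide_eq_true_eq]
  have hsum : (∑ j ∈ H, y j) = (Sstar ∩ H).card := by
    simp only [hy]
    rw [Finset.sum_ite_mem]
    rw [Finset.inter_comm]
    exact (Finset.card_eq_sum_ones _).symm
  have hm_cut : (E'.filter (fun e => e ∈ pathSym2Edges (d :: (l ++ [d'])))).card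
      ≤ cutCount H (d :: (l ++ [d'])) := by
    have hA : E'.filter (fun e => e ∈ pathSym2Edges (d :: (l ++ [d'])))
        = ((pathSym2Edges (d :: (l ++ [d']))).filter (fun e => decide (e ∈ E'))).toFinset := by
      ext e
      simp [List.mem_toFinset, List.mem_filter, and_comm]
    have hB : (E'.filter (fun e => e ∈ pathSym2Edges (d :: (l ++ [d'])))).card
        ≤ ((pathSym2Edges (d :: (l ++ [d']))).filter (fun e => decide (e ∈ E'))).length := by
      rw [hA]; exact List.toFinset_card_le _
    rw [← List.countP_eq_length_filter] at hB
    refine hB.trans ?_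
    unfold pathSym2Edges cutCount
    rw [List.countP_map]
    apply List.countP_mono_left
    intro qq hq hqE
    simp only [Function.comp, decide_eq_true_eq] at hqE ⊢
    obtain ⟨a, b, hab, haH', hbH'⟩ := hi _ hqE
    have haH : a ∈ H := hH' haH'
    have hbH : b ∉ H := hends _ hqE a b hab haH'
    rcases (Sym2.eq_iff).mp hab with ⟨h1, h2⟩ | ⟨h1, h2⟩ <;>
      rw [h1, h2] <;> simp [Xor, haH, hbH]
  have hm_H' : (E'.filter (fun e => e ∈ pathSym2Edges (d :: (l ++ [d'])))).card
      ≤ H'.card := by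
    have h1 : (E'.filter (fun e => e ∈ pathSym2Edges (d :: (l ++ [d'])))).card ≤ E'.card :=
      Finset.card_le_card (Finset.filter_subset _ _)
    refine h1.trans ?_
    have hex : ∀ e ∈ E', ∃ a, a ∈ e ∧ a ∈ H' := by
      intro e he
      obtain ⟨a, b, hab, haH', _⟩ := hi _ he
      exact ⟨a, by rw [hab]; exact Sym2.mem_mk_left a b, haH'⟩
    apply Finset.card_le_card_of_injOn
      (fun e => if h : ∃ a, a ∈ e ∧ a ∈ H' then h.choose else d)
    · intro e he
      dsimp only
      rw [dif_pos (hex e he)]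
      exact (hex e he).choose_spec.2
    · intro e₁ he₁ e₂ he₂ heq
      have he₁' : e₁ ∈ E' := he₁
      have he₂' : e₂ ∈ E' := he₂
      dsimp only at heq
      rw [dif_pos (hex e₁ he₁'), dif_pos (hex e₂ he₂')] at heq
      by_contra hne
      have h1 := (hex e₁ he₁').choose_spec.1
      have h2 := (hex e₂ he₂').choose_spec.1
      rw [heq] at h1
      exact hiv e₂ he₂' e₁ he₁' (Ne.symm hne) _ h2 h1
  obtain ⟨qn, hqn⟩ := hH'odd
  rw [hcp] at hkey
  rw [hsum]
  omega
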